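/- For a set partition π of [n], let K_π^c denote the complement of the disjoint union of complete graphs on the blocks of π. Then Υ_G(K_π^c) = Σ_{τ ≤ π} m_τ, summed over set partitions τ refined by π in the coarsening order (i.e., every block of τ is contained in a block of π). -/

import Mathlib

open scoped Classical

instance setoidFinite {α : Type*} [Finite α] : Finite (Setoid α) :=
  Finite.of_injective (fun s : Setoid α => s.r) fun a b h => by
    cases a; cases b; cases h; rfl

noncomputable instance setoidFintype {α : Type*} [Finite α] : Fintype (Setoid α) :=
  Fintype.ofFinite _

/-- The graph `K_π^c`: the complement of the disjoint union of complete graphs on the blocks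
of the set partition `π` of `[n]` (encoded as a setoid). -/
def Kc {n : ℕ} (π : Setoid (Fin n)) : SimpleGraph (Fin n) where
  Adj i j := i ≠ j ∧ ¬ π.r i j
  symm := by
    constructor
    rintro i j ⟨h₁, h₂⟩
    exact ⟨h₁.symm, fun hr => h₂ (π.iseqv.symm hr)⟩
  loopless := by constructor; rintro i ⟨h, -⟩; exact h rfl

/-- `Υ(K_π^c) = ∑_{τ ≤ π} m_τ`, the sum over set partitions `τ` refining
`π`. The identity is stated coefficientwise on words `w : Fin n → ℕ`: the coefficient of `w`
in `Υ(K_π^c)` is `1` iff `w` is a proper coloring of `K_π^c`, and its coefficient in `m_τ`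
is `1` iff the level sets of `w` are exactly the blocks of `τ`. -/
theorem stmt6 {n : ℕ} (π : Setoid (Fin n)) (w : Fin n → ℕ) :
    (if ∀ i j, (Kc π).Adj i j → w i ≠ w j then (1 : ℚ) else 0) =
      ∑ τ ∈ Finset.univ.filter
          (fun τ : Setoid (Fin n) => ∀ i j, τ.r i j → π.r i j),
        (if ∀ i j, w i = w j ↔ τ.r i j then (1 : ℚ) else 0) := by
  set τ₀ : Setoid (Fin n) := ⟨fun i j => w i = w j, ⟨fun _ => rfl, Eq.symm, Eq.trans⟩⟩ with hτ₀
  have key : ∀ τ : Setoid (Fin n), (∀ i j, w i = w j ↔ τ.r i j) ↔ τ = τ₀ := by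
    intro τ
    constructor
    · intro h
      apply Setoid.ext
      intro i j
      rw [← h]
      exact Iff.rfl
    · rintro rfl i j
      exact Iff.rfl
  calc (if ∀ i j, (Kc π).Adj i j → w i ≠ w j then (1 : ℚ) else 0)
      = if τ₀ ∈ Finset.univ.filter
          (fun τ : Setoid (Fin n) => ∀ i j, τ.r i j → π.r i j) then (1:ℚ) else 0 := by
        congr 1
        simp only [Finset.mem_filter, Finset.mem_univ, true_and, eq_iff_iff]
        constructor
        · intro h i j hw
          by_contra hnr
          by_cases hij : i = j
          · exact hnr (hij ▸ π.iseqv.refl i)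
          · exact h i j ⟨hij, hnr⟩ hw
        · intro h i j hadj hw
          exact hadj.2 (h i j hw)
    _ = _ := by
        rw [Finset.sum_congr rfl (fun τ _ => if_congr (key τ) rfl rfl),
          Finset.sum_ite_eq' _ τ₀ (fun _ => (1:ℚ))]
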